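/- Assume (B1) and (B2), let Λ be the finite constant of Proposition 1 (the ℙ-a.s. limit of (1/n)·log μQ_n^ω(1)), and let (η,h,λ) be the eigen-triple of Proposition 2. Then Λ = 𝔼[log λ] = ∫_Ω log λ_ω ℙ(dω); equivalently, since λ_ω = Q^ω(h(zω,·))(x)/h(ω,x) for every x ∈ E, one has Λ = ∫_Ω log( Q^ω(h(zω,·))(x) / h(ω,x) ) ℙ(dω) for any x ∈ E. -/

import Mathlib

open MeasureTheory ENNReal Filter Topology

noncomputable section

/-- The environment space `Ω = H^ℤ`. -/
abbrev Env (H : Type*) := ℤ → H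

/-- The shift operator `z`: `(zω)(n) = ω(n+1)`. -/
def shift {H : Type*} (ω : Env H) : Env H := fun n => ω (n + 1)

/-- The inverse shift `z⁻¹`: `(z⁻¹ω)(n) = ω(n-1)`. -/
def shiftInv {H : Type*} (ω : Env H) : Env H := fun n => ω (n - 1)

/-- Iterates `z^{-k}` of the inverse shift. -/
def zitInv {H : Type*} : ℕ → Env H → Env H
  | 0, ω => ω
  | n + 1, ω => shiftInv (zitInv n ω)

variable {H E : Type*} [MeasurableSpace H] [MeasurableSpace E]

/-- Iterates `z^k` of the shift. -/
def zit {H : Type*} : ℕ → Env H → Env H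
  | 0, ω => ω
  | n + 1, ω => shift (zit n ω)

/-- The sub-Markov kernel `Q^ω(x,dx') = W(ω,x) M^ω(x,dx')`. -/
def Qk (M : Env H → E → Measure E) (W : Env H → E → ℝ) (ω : Env H) (x : E) :
    Measure E := ENNReal.ofReal (W ω x) • M ω x

/-- The compositions `Q_n^ω = Q^ω Q^{zω} ⋯ Q^{z^{n-1}ω}` (with `Q_0` the identity). -/
def Qn (M : Env H → E → Measure E) (W : Env H → E → ℝ) :
    ℕ → Env H → E → Measure E
  | 0, _, x => Measure.dirac x
  | n + 1, ω, x => (Qn M W n ω x).bind (Qk M W (zit n ω))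

/-- The total mass `σ Q_n^ω(1)`. -/
def QnMass (M : Env H → E → Measure E) (W : Env H → E → ℝ)
    (n : ℕ) (ω : Env H) (σ : Measure E) : ℝ≥0∞ :=
  (σ.bind (Qn M W n ω)) Set.univ

/-- `Φ_n^ω(σ)(A) = σQ_n^ω(A) / σQ_n^ω(1)`. -/
def PhiSet (M : Env H → E → Measure E) (W : Env H → E → ℝ)
    (n : ℕ) (ω : Env H) (σ : Measure E) (A : Set E) : ℝ≥0∞ :=
  (σ.bind (Qn M W n ω)) A / QnMass M W n ω σ

/-- `Φ_n^ω(σ)(φ)` for a `ℝ≥0∞`-valued function `φ`. -/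
def PhiFun (M : Env H → E → Measure E) (W : Env H → E → ℝ)
    (n : ℕ) (ω : Env H) (σ : Measure E) (φ : E → ℝ≥0∞) : ℝ≥0∞ :=
  (∫⁻ y, φ y ∂(σ.bind (Qn M W n ω))) / QnMass M W n ω σ

/-- The ratio `Q_n^ω(1)(x) / Φ_n^{z^{-n}ω}(σ)(Q_n^ω(1))` whose limit defines `h(ω,x)`. -/
def ratioH (M : Env H → E → Measure E) (W : Env H → E → ℝ) (σ : Measure E)
    (n : ℕ) (ω : Env H) (x : E) : ℝ≥0∞ :=
  (Qn M W n ω x) Set.univ /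
    PhiFun M W n (zitInv n ω) σ (fun y => (Qn M W n ω y) Set.univ)

/-- Birkhoff sums. -/
def birkS {Ω : Type*} (T : Ω → Ω) (f : Ω → ℝ) (n : ℕ) (ω : Ω) : ℝ :=
  ∑ k ∈ Finset.range n, f (T^[k] ω)

lemma birkS_add {Ω : Type*} (T : Ω → Ω) (f : Ω → ℝ) (n m : ℕ) (ω : Ω) :
    birkS T f (n + m) ω = birkS T f n ω + birkS T f m (T^[n] ω) := by
  induction m with
  | zero => simp [birkS]
  | succ m ih =>
    have : n + (m + 1) = (n + m) + 1 := by omega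
    rw [this]
    show (∑ k ∈ Finset.range (n+m+1), f (T^[k] ω)) = _
    rw [Finset.sum_range_succ]
    have h2 : (∑ k ∈ Finset.range (n+m), f (T^[k] ω)) = birkS T f (n+m) ω := rfl
    rw [h2, ih]
    show _ = _ + ∑ k ∈ Finset.range (m+1), f (T^[k] (T^[n] ω))
    rw [Finset.sum_range_succ]
    have h3 : T^[m] (T^[n] ω) = T^[n+m] ω := by
      rw [add_comm n m, Function.iterate_add_apply]
    rw [h3]
    have h4 : (∑ k ∈ Finset.range m, f (T^[k] (T^[n] ω))) = birkS T f m (T^[n] ω) := rfl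
    rw [h4]; ring

lemma birkS_succ_left {Ω : Type*} (T : Ω → Ω) (f : Ω → ℝ) (n : ℕ) (ω : Ω) :
    birkS T f (n + 1) ω = f ω + birkS T f n (T ω) := by
  have := birkS_add T f 1 n ω
  simp only [birkS, Finset.sum_range_one, Function.iterate_zero_apply,
    Function.iterate_one] at this ⊢
  rw [add_comm 1 n] at this
  exact this

lemma birkS_nonneg {Ω : Type*} {T : Ω → Ω} {f : Ω → ℝ} (hf : ∀ ω, 0 ≤ f ω)
    (n : ℕ) (ω : Ω) : 0 ≤ birkS T f n ω :=
  Finset.sum_nonneg fun _ _ => hf _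

lemma birkS_measurable {Ω : Type*} [MeasurableSpace Ω] {T : Ω → Ω} {f : Ω → ℝ}
    (hT : Measurable T) (hf : Measurable f) (n : ℕ) :
    Measurable (birkS T f n) :=
  Finset.measurable_sum _ fun k _ => hf.comp (hT.iterate k)

lemma integrable_comp_iterate {Ω : Type*} [MeasurableSpace Ω] {P : Measure Ω}
    {T : Ω → Ω} (hT : MeasurePreserving T P P) {f : Ω → ℝ} (hfm : Measurable f)
    (hf : Integrable f P) (k : ℕ) : Integrable (fun ω => f (T^[k] ω)) P := by
  have hk : MeasurePreserving (T^[k]) P P := hT.iterate k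
  rw [← hk.map_eq] at hf
  exact hf.comp_measurable hk.measurable

lemma integral_comp_iterate {Ω : Type*} [MeasurableSpace Ω] {P : Measure Ω}
    {T : Ω → Ω} (hT : MeasurePreserving T P P) {f : Ω → ℝ} (hfm : Measurable f)
    (k : ℕ) : ∫ ω, f (T^[k] ω) ∂P = ∫ ω, f ω ∂P := by
  have hk : MeasurePreserving (T^[k]) P P := hT.iterate k
  rw [← integral_map hk.measurable.aemeasurable
    (by rw [hk.map_eq]; exact hfm.aestronglyMeasurable), hk.map_eq]

lemma integral_birkS {Ω : Type*} [MeasurableSpace Ω] {P : Measure Ω}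
    {T : Ω → Ω} (hT : MeasurePreserving T P P) {f : Ω → ℝ} (hfm : Measurable f)
    (hf : Integrable f P) (n : ℕ) :
    ∫ ω, birkS T f n ω ∂P = n * ∫ ω, f ω ∂P := by
  have : (fun ω => birkS T f n ω) = fun ω => ∑ k ∈ Finset.range n, f (T^[k] ω) := rfl
  rw [this, integral_finset_sum _ (fun k _ => integrable_comp_iterate hT hfm hf k)]
  simp_rw [integral_comp_iterate hT hfm]
  simp [Finset.sum_const]

lemma integrable_birkS {Ω : Type*} [MeasurableSpace Ω] {P : Measure Ω}
    {T : Ω → Ω} (hT : MeasurePreserving T P P) {f : Ω → ℝ} (hfm : Measurable f)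
    (hf : Integrable f P) (n : ℕ) :
    Integrable (fun ω => birkS T f n ω) P := by
  have heq : (fun ω => birkS T f n ω) = fun ω => ∑ k ∈ Finset.range n, f (T^[k] ω) := rfl
  rw [heq]
  exact integrable_finset_sum _ fun k _ => integrable_comp_iterate hT hfm hf k

/-- A converse-Birkhoff lemma: if Birkhoff averages of a nonnegative measurable
function converge a.e. to a constant `c`, then the function is integrable with
integral `c`. -/
lemma lemA {Ω : Type*} [MeasurableSpace Ω] (P : Measure Ω) [IsProbabilityMeasure P]
    (T : Ω → Ω) (hT : MeasurePreserving T P P)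
    (φ : Ω → ℝ) (hφm : Measurable φ) (hφ0 : ∀ ω, 0 ≤ φ ω) (c : ℝ)
    (hconv : ∀ᵐ ω ∂P, Tendsto (fun n : ℕ => birkS T φ n ω / n) atTop (𝓝 c)) :
    Integrable φ P ∧ ∫ ω, φ ω ∂P = c := by
  have hTm : Measurable T := hT.measurable
  -- c ≥ 0
  have hc0 : 0 ≤ c := by
    have hne : (ae P).NeBot := ae_neBot.2 (IsProbabilityMeasure.ne_zero P)
    obtain ⟨ω, hω⟩ := hconv.exists
    exact ge_of_tendsto hω (Eventually.of_forall fun n =>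
      div_nonneg (birkS_nonneg hφ0 _ _) (Nat.cast_nonneg n))
  -- The key upper bound : ∫⁻ ofReal φ ≤ ofReal c
  have hupper : ∫⁻ ω, ENNReal.ofReal (φ ω) ∂P ≤ ENNReal.ofReal c := by
    refine ENNReal.le_of_forall_pos_le_add fun ε hε _ => ?_
    set c' : ℝ := c + ε with hc'
    have hc'0 : 0 ≤ c' := by positivity
    have hcc' : c < c' := by have : (0:ℝ) < ε := hε; linarith
    -- good set
    set G : Set Ω := {ω | ∀ i : ℕ, ∃ n : ℕ, 1 ≤ n ∧ birkS T φ n (T^[i] ω) ≤ c' * n}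
      with hG
    set G₀ : Set Ω := {ω | ∃ n : ℕ, 1 ≤ n ∧ birkS T φ n ω ≤ c' * n} with hG₀
    have hG₀meas : MeasurableSet G₀ := by
      have : G₀ = ⋃ n : ℕ, {ω | 1 ≤ n ∧ birkS T φ n ω ≤ c' * n} := by
        ext ω; simp [hG₀]
      rw [this]
      refine MeasurableSet.iUnion fun n => ?_
      by_cases hn : 1 ≤ n
      · have : {ω | 1 ≤ n ∧ birkS T φ n ω ≤ c' * n}
            = {ω | birkS T φ n ω ≤ c' * n} := by ext ω; simp [hn]
        rw [this]
        exact measurableSet_le (birkS_measurable hTm hφm n) measurable_const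
      · have : {ω | 1 ≤ n ∧ birkS T φ n ω ≤ c' * n} = ∅ := by ext ω; simp [hn]
        rw [this]; exact MeasurableSet.empty
    have hG₀null : P G₀ᶜ = 0 := by
      have haeG₀ : ∀ᵐ ω ∂P, ω ∈ G₀ := by
        filter_upwards [hconv] with ω hω
        have hev : ∀ᶠ n : ℕ in atTop, birkS T φ n ω / n < c' :=
          Filter.Tendsto.eventually_lt_const hcc' hω
        obtain ⟨n, hn, hn1⟩ := (hev.and (eventually_ge_atTop 1)).exists
        refine ⟨n, hn1, ?_⟩
        have hnpos : (0:ℝ) < n := by exact_mod_cast hn1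
        rw [div_lt_iff₀ hnpos] at hn
        linarith [hn]
      have := haeG₀
      rw [ae_iff] at this
      rw [Set.compl_def]
      exact this
    have haeG : ∀ᵐ ω ∂P, ω ∈ G := by
      have hall : ∀ᵐ ω ∂P, ∀ i : ℕ, T^[i] ω ∈ G₀ := by
        rw [ae_all_iff]
        intro i
        have hmp : MeasurePreserving (T^[i]) P P := hT.iterate i
        have hpre : P ((T^[i]) ⁻¹' G₀ᶜ) = P G₀ᶜ :=
          hmp.measure_preimage hG₀meas.compl.nullMeasurableSet
        rw [ae_iff]
        have heq : {ω | ¬ T^[i] ω ∈ G₀} = (T^[i]) ⁻¹' G₀ᶜ := rfl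
        rw [heq, hpre, hG₀null]
      filter_upwards [hall] with ω hω
      exact fun i => hω i
    set Bs : ℕ → Set Ω :=
      fun L => {ω | ∀ n : ℕ, 1 ≤ n → n ≤ L → c' * n < birkS T φ n ω} with hBs
    have hBsmeas : ∀ L, MeasurableSet (Bs L) := by
      intro L
      have heq : Bs L = ⋂ n : ℕ, {ω | 1 ≤ n → n ≤ L → c' * n < birkS T φ n ω} := by
        ext ω; simp [hBs]
      rw [heq]
      refine MeasurableSet.iInter fun n => ?_
      by_cases h1 : 1 ≤ n
      · by_cases h2 : n ≤ L
        · have heq2 : {ω | 1 ≤ n → n ≤ L → c' * ↑n < birkS T φ n ω}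
              = {ω | c' * ↑n < birkS T φ n ω} := by ext ω; simp [h1, h2]
          rw [heq2]
          exact measurableSet_lt measurable_const (birkS_measurable hTm hφm n)
        · have heq2 : {ω | 1 ≤ n → n ≤ L → c' * ↑n < birkS T φ n ω} = Set.univ := by
            ext ω; simp [h2]
          rw [heq2]; exact MeasurableSet.univ
      · have heq2 : {ω | 1 ≤ n → n ≤ L → c' * ↑n < birkS T φ n ω} = Set.univ := by
          ext ω; simp [h1]
        rw [heq2]; exact MeasurableSet.univ
    -- key pointwise estimate
    have key : ∀ (M : ℝ), 0 ≤ M → ∀ L : ℕ, ∀ N : ℕ, ∀ ω ∈ G,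
        birkS T (fun ω' => min (φ ω') M) N ω
          ≤ c' * N + M * birkS T ((Bs L).indicator 1) N ω + M * L := by
      intro M hM L N
      induction N using Nat.strong_induction_on with
      | _ N IH =>
        intro ω hωG
        have hχ0 : ∀ ω', (0:ℝ) ≤ (Bs L).indicator 1 ω' := fun ω' =>
          Set.indicator_nonneg (fun _ _ => zero_le_one) ω'
        rcases Nat.eq_zero_or_pos N with h0 | hNpos
        · subst h0
          have hz1 : birkS T (fun ω' => min (φ ω') M) 0 ω = 0 := by simp [birkS]
          have hz2 : birkS T ((Bs L).indicator 1) 0 ω = 0 := by simp [birkS]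
          rw [hz1, hz2]
          have : (0:ℝ) ≤ M * L := mul_nonneg hM (Nat.cast_nonneg L)
          simp only [Nat.cast_zero, mul_zero, add_zero, zero_add]
          linarith
        by_cases hωB : ω ∈ Bs L
        · obtain ⟨N', rfl⟩ : ∃ N', N = N' + 1 := ⟨N - 1, by omega⟩
          have hTω : T ω ∈ G := by
            intro i
            have h := hωG (i + 1)
            rwa [Function.iterate_succ_apply] at h
          have hrec := IH N' (by omega) (T ω) hTω
          rw [birkS_succ_left, birkS_succ_left]
          have hmin : min (φ ω) M ≤ M := min_le_right _ _
          have hind : (Bs L).indicator (1 : Ω → ℝ) ω = 1 := Set.indicator_of_mem hωB 1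
          rw [hind]
          push_cast
          nlinarith [hrec, hmin, hc'0]
        · have hex : ∃ n : ℕ, 1 ≤ n ∧ n ≤ L ∧ birkS T φ n ω ≤ c' * n := by
            by_contra hcon
            push_neg at hcon
            exact hωB fun n h1 h2 => hcon n h1 h2
          obtain ⟨n, hn1, hnL, hSn⟩ := hex
          rcases le_or_gt n N with hnN | hNn
          · obtain ⟨R, rfl⟩ : ∃ R, N = n + R := ⟨N - n, by omega⟩
            have hTn : T^[n] ω ∈ G := by
              intro i
              have h := hωG (i + n)
              rwa [Function.iterate_add_apply] at h
            have hrec := IH R (by omega) (T^[n] ω) hTn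
            rw [birkS_add, birkS_add]
            have hminle : birkS T (fun ω' => min (φ ω') M) n ω ≤ birkS T φ n ω :=
              Finset.sum_le_sum fun k _ => min_le_left _ _
            have hχn : 0 ≤ birkS T ((Bs L).indicator 1) n ω := birkS_nonneg hχ0 n ω
            have hMχ : 0 ≤ M * birkS T ((Bs L).indicator 1) n ω := mul_nonneg hM hχn
            push_cast
            nlinarith [hrec, hminle, hSn, hMχ]
          · have hbound : birkS T (fun ω' => min (φ ω') M) N ω ≤ (N:ℝ) * M := by
              calc birkS T (fun ω' => min (φ ω') M) N ω
                  ≤ ∑ _k ∈ Finset.range N, M :=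
                    Finset.sum_le_sum fun k _ => min_le_right _ _
                _ = (N:ℝ) * M := by
                    rw [Finset.sum_const, Finset.card_range, nsmul_eq_mul]
            have hNL : (N:ℝ) ≤ L := by exact_mod_cast (by omega : N ≤ L)
            have hχN : 0 ≤ birkS T ((Bs L).indicator 1) N ω := birkS_nonneg hχ0 N ω
            have h1 : (N:ℝ) * M ≤ M * L := by nlinarith [hM, hNL, Nat.cast_nonneg (α := ℝ) N]
            have h2 : (0:ℝ) ≤ c' * N := mul_nonneg hc'0 (Nat.cast_nonneg N)
            have h3 : 0 ≤ M * birkS T ((Bs L).indicator 1) N ω := mul_nonneg hM hχN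
            linarith
    -- integrability helpers
    have hφMint : ∀ M : ℝ, 0 ≤ M → Integrable (fun ω => min (φ ω) M) P := by
      intro M hM
      refine (integrable_const M).mono'
        ((hφm.min measurable_const).aestronglyMeasurable) ?_
      refine Eventually.of_forall fun ω => ?_
      rw [Real.norm_eq_abs, abs_of_nonneg (le_min (hφ0 ω) hM)]
      exact min_le_right _ _
    have hχint : ∀ L, Integrable ((Bs L).indicator (1 : Ω → ℝ)) P := by
      intro L
      refine (integrable_const (1:ℝ)).mono'
        ((measurable_one.indicator (hBsmeas L)).aestronglyMeasurable) ?_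
      refine Eventually.of_forall fun ω => ?_
      classical
      by_cases hmem : ω ∈ Bs L <;> simp [hmem]
    have hstep : ∀ (M : ℝ), 0 ≤ M → ∀ L : ℕ,
        ∫ ω, min (φ ω) M ∂P ≤ c' + M * (P (Bs L)).toReal := by
      intro M hM L
      have hφMm : Measurable (fun ω => min (φ ω) M) := hφm.min measurable_const
      have hχm : Measurable ((Bs L).indicator (1 : Ω → ℝ)) :=
        measurable_one.indicator (hBsmeas L)
      have hIneq : ∀ N : ℕ, (N:ℝ) * ∫ ω, min (φ ω) M ∂P
          ≤ c' * N + M * ((N:ℝ) * (P (Bs L)).toReal) + M * L := by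
        intro N
        have hae : ∀ᵐ ω ∂P, birkS T (fun ω' => min (φ ω') M) N ω
            ≤ c' * N + M * birkS T ((Bs L).indicator 1) N ω + M * L := by
          filter_upwards [haeG] with ω hω
          exact key M hM L N ω hω
        have hb1 : Integrable (fun ω => birkS T (fun ω' => min (φ ω') M) N ω) P :=
          integrable_birkS hT hφMm (hφMint M hM) N
        have hb2 : Integrable (fun ω => birkS T ((Bs L).indicator 1) N ω) P :=
          integrable_birkS hT hχm (hχint L) N
        have hint2 : Integrable
            (fun ω => c' * ↑N + M * birkS T ((Bs L).indicator 1) N ω + M * ↑L) P :=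
          ((integrable_const _).add (hb2.const_mul M)).add (integrable_const _)
        have hmono := integral_mono_ae hb1 hint2 hae
        rw [integral_birkS hT hφMm (hφMint M hM) N] at hmono
        have hrhs : ∫ ω, (c' * ↑N + M * birkS T ((Bs L).indicator 1) N ω + M * ↑L) ∂P
            = c' * ↑N + M * ((N:ℝ) * (P (Bs L)).toReal) + M * ↑L := by
          have e1 : (fun ω => c' * ↑N + M * birkS T ((Bs L).indicator 1) N ω + M * ↑L)
              = fun ω => (M * birkS T ((Bs L).indicator 1) N ω) + (c' * ↑N + M * ↑L) := by
            funext ω; ring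
          rw [show (∫ ω, (c' * ↑N + M * birkS T ((Bs L).indicator 1) N ω + M * ↑L) ∂P)
              = ∫ ω, ((M * birkS T ((Bs L).indicator 1) N ω) + (c' * ↑N + M * ↑L)) ∂P
            from by rw [← e1],
            integral_add (hb2.const_mul M) (integrable_const _), integral_const_mul,
            integral_birkS hT hχm (hχint L) N, integral_indicator_one (hBsmeas L),
            integral_const]
          simp only [Measure.real, measure_univ, ENNReal.toReal_one, smul_eq_mul, one_mul, mul_one]
          ring
        rw [hrhs] at hmono
        exact hmono
      have htend : Tendsto
          (fun N : ℕ => c' + M * (P (Bs L)).toReal + (M * L) / N) atTop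
          (𝓝 (c' + M * (P (Bs L)).toReal)) := by
        have h0 := tendsto_const_div_atTop_nhds_zero_nat (M * L)
        simpa using (tendsto_const_nhds.add h0)
      refine ge_of_tendsto htend ?_
      filter_upwards [eventually_ge_atTop 1] with N hN
      have hNpos : (0:ℝ) < N := by exact_mod_cast hN
      have h2 : ∫ ω, min (φ ω) M ∂P
          ≤ (c' * N + M * ((N:ℝ) * (P (Bs L)).toReal) + M * L) / N := by
        rw [le_div_iff₀ hNpos]
        have := hIneq N
        linarith
      refine h2.trans (le_of_eq ?_)
      field_simp
    have hBtend : Tendsto (⇑P ∘ Bs) atTop (𝓝 0) := by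
      have hanti : Antitone Bs := by
        intro a b hab ω hω
        exact fun n h1 h2 => hω n h1 (h2.trans hab)
      have hInull : P (⋂ L, Bs L) = 0 := by
        have hsub : (⋂ L, Bs L) ⊆ G₀ᶜ := by
          intro ω hω hωG₀
          obtain ⟨n, hn1, hn⟩ := hωG₀
          exact absurd hn (not_le.2 ((Set.mem_iInter.1 hω n) n hn1 le_rfl))
        exact measure_mono_null hsub hG₀null
      have h := tendsto_measure_iInter_atTop (μ := P) (s := Bs)
        (fun L => (hBsmeas L).nullMeasurableSet) hanti ⟨0, measure_ne_top P _⟩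
      rwa [hInull] at h
    have hMstep : ∀ j : ℕ, ∫ ω, min (φ ω) (j:ℝ) ∂P ≤ c' := by
      intro j
      have h2 : Tendsto (fun L => (P (Bs L)).toReal) atTop (𝓝 0) := by
        have h3 := (ENNReal.tendsto_toReal (by simp : (0:ℝ≥0∞) ≠ ⊤)).comp hBtend
        simpa [Function.comp_def] using h3
      have htr : Tendsto (fun L : ℕ => c' + (j:ℝ) * (P (Bs L)).toReal) atTop (𝓝 c') := by
        have h5 : Tendsto (fun L : ℕ => (j:ℝ) * (P (Bs L)).toReal) atTop (𝓝 0) := by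
          simpa using h2.const_mul (j:ℝ)
        have h6 := (tendsto_const_nhds (x := c') (f := (atTop : Filter ℕ))).add h5
        simpa using h6
      exact ge_of_tendsto htr
        (Eventually.of_forall fun L => hstep (j:ℝ) (Nat.cast_nonneg j) L)
    have hsup : ∫⁻ ω, ENNReal.ofReal (φ ω) ∂P
        = ⨆ j : ℕ, ∫⁻ ω, ENNReal.ofReal (min (φ ω) (j:ℝ)) ∂P := by
      rw [← lintegral_iSup (fun j => (hφm.min measurable_const).ennreal_ofReal)
        (fun a b hab ω => ENNReal.ofReal_le_ofReal
          (min_le_min le_rfl (by exact_mod_cast hab)))]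
      refine lintegral_congr fun ω => ?_
      apply le_antisymm
      · refine le_iSup_of_le ⌈φ ω⌉₊ ?_
        rw [min_eq_left (Nat.le_ceil _)]
      · exact iSup_le fun j => ENNReal.ofReal_le_ofReal (min_le_left _ _)
    have hfinal : ∫⁻ ω, ENNReal.ofReal (φ ω) ∂P ≤ ENNReal.ofReal c' := by
      rw [hsup]
      refine iSup_le fun j => ?_
      rw [← ofReal_integral_eq_lintegral_ofReal (hφMint (j:ℝ) (Nat.cast_nonneg j))
        (Eventually.of_forall fun ω => le_min (hφ0 ω) (Nat.cast_nonneg j))]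
      exact ENNReal.ofReal_le_ofReal (hMstep j)
    calc ∫⁻ ω, ENNReal.ofReal (φ ω) ∂P ≤ ENNReal.ofReal c' := hfinal
      _ = ENNReal.ofReal (c + ε) := by rw [hc']
      _ ≤ ENNReal.ofReal c + ENNReal.ofReal ε := ENNReal.ofReal_add_le
      _ = ENNReal.ofReal c + ε := by rw [ENNReal.ofReal_coe_nnreal]
  -- Fatou lower bound
  have hlower : ENNReal.ofReal c ≤ ∫⁻ ω, ENNReal.ofReal (φ ω) ∂P := by
    have hFatou := lintegral_liminf_le (μ := P) (u := atTop)
      (fun n : ℕ => ((birkS_measurable hTm hφm n).div_const ((n:ℝ))).ennreal_ofReal)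
    have hLHS : ∫⁻ ω, liminf (fun n : ℕ => ENNReal.ofReal (birkS T φ n ω / n)) atTop ∂P
        = ENNReal.ofReal c := by
      have hco : ∀ᵐ ω ∂P, liminf (fun n : ℕ => ENNReal.ofReal (birkS T φ n ω / n)) atTop
          = ENNReal.ofReal c := by
        filter_upwards [hconv] with ω hω
        exact ((ENNReal.continuous_ofReal.tendsto c).comp hω).liminf_eq
      rw [lintegral_congr_ae hco, lintegral_const]
      simp [measure_univ]
    have hRHS : ∀ n : ℕ, 1 ≤ n → ∫⁻ ω, ENNReal.ofReal (birkS T φ n ω / n) ∂P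
        = ∫⁻ ω, ENNReal.ofReal (φ ω) ∂P := by
      intro n hn
      have hnpos : (0:ℝ) < n := by exact_mod_cast hn
      have h1 : ∀ ω, ENNReal.ofReal (birkS T φ n ω / n)
          = (∑ k ∈ Finset.range n, ENNReal.ofReal (φ (T^[k] ω))) * ((n:ℝ≥0∞))⁻¹ := by
        intro ω
        have hb : birkS T φ n ω = ∑ k ∈ Finset.range n, φ (T^[k] ω) := rfl
        rw [hb, ENNReal.ofReal_div_of_pos hnpos,
          ENNReal.ofReal_sum_of_nonneg (fun k _ => hφ0 _), ENNReal.ofReal_natCast,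
          div_eq_mul_inv]
      simp_rw [h1]
      have hmk : ∀ k : ℕ, Measurable fun ω => ENNReal.ofReal (φ (T^[k] ω)) := fun k =>
        ((hφm.comp (hTm.iterate k)).ennreal_ofReal :)
      rw [lintegral_mul_const _
        ((Finset.measurable_sum (Finset.range n) fun k _ => hmk k :)),
        lintegral_finset_sum _ (fun k _ => hmk k)]
      have h2 : ∀ k, ∫⁻ ω, ENNReal.ofReal (φ (T^[k] ω)) ∂P
          = ∫⁻ ω, ENNReal.ofReal (φ ω) ∂P :=
        fun k => (hT.iterate k).lintegral_comp hφm.ennreal_ofReal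
      simp_rw [h2]
      rw [Finset.sum_const, Finset.card_range, nsmul_eq_mul, mul_comm (n : ℝ≥0∞),
        mul_assoc, ENNReal.mul_inv_cancel
          (by exact_mod_cast (by omega : n ≠ 0)) (ENNReal.natCast_ne_top n), mul_one]
    have hliminf : liminf
        (fun n : ℕ => ∫⁻ ω, ENNReal.ofReal (birkS T φ n ω / n) ∂P) atTop
        = ∫⁻ ω, ENNReal.ofReal (φ ω) ∂P := by
      have hev : ∀ᶠ n : ℕ in atTop, ∫⁻ ω, ENNReal.ofReal (birkS T φ n ω / n) ∂P
          = ∫⁻ ω, ENNReal.ofReal (φ ω) ∂P := by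
        filter_upwards [eventually_ge_atTop 1] with n hn using hRHS n hn
      rw [liminf_congr hev, liminf_const]
    rw [hLHS, hliminf] at hFatou
    exact hFatou
  have hInt : Integrable φ P :=
    ⟨hφm.aestronglyMeasurable, (hasFiniteIntegral_iff_ofReal
      (Eventually.of_forall hφ0)).2 (lt_of_le_of_lt hupper ENNReal.ofReal_lt_top)⟩
  refine ⟨hInt, ?_⟩
  rw [integral_eq_lintegral_of_nonneg_ae (Eventually.of_forall hφ0)
    hφm.aestronglyMeasurable, le_antisymm hupper hlower, ENNReal.toReal_ofReal hc0]

lemma zit_eq_iterate {H : Type*} (n : ℕ) (ω : Env H) : zit n ω = shift^[n] ω := by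
  induction n with
  | zero => rfl
  | succ n ih =>
    show shift (zit n ω) = _
    rw [ih, ← Function.iterate_succ_apply' shift n ω]

lemma measurable_Qk {H E : Type*} [MeasurableSpace H] [MeasurableSpace E]
    {M : Env H → E → Measure E} {W : Env H → E → ℝ}
    (hM : Measurable fun p : Env H × E => M p.1 p.2)
    (hW : Measurable fun p : Env H × E => W p.1 p.2) (ω : Env H) :
    Measurable (Qk M W ω) := by
  apply Measure.measurable_of_measurable_coe
  intro s hs
  have h1 : Measurable fun x : E => W ω x := hW.comp measurable_prodMk_left
  have h2 : Measurable fun x : E => M ω x s :=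
    (Measure.measurable_coe hs).comp (hM.comp measurable_prodMk_left)
  have h3 : (fun x => Qk M W ω x s) = fun x => ENNReal.ofReal (W ω x) * M ω x s := by
    funext x
    simp [Qk, Measure.smul_apply, smul_eq_mul]
  rw [h3]
  exact h1.ennreal_ofReal.mul h2

lemma measurable_Qn {H E : Type*} [MeasurableSpace H] [MeasurableSpace E]
    {M : Env H → E → Measure E} {W : Env H → E → ℝ}
    (hM : Measurable fun p : Env H × E => M p.1 p.2)
    (hW : Measurable fun p : Env H × E => W p.1 p.2) (n : ℕ) (ω : Env H) :
    Measurable (Qn M W n ω) := by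
  induction n with
  | zero => exact Measure.measurable_dirac
  | succ n ih =>
    have h1 : Qn M W (n+1) ω = fun x => (Qn M W n ω x).bind (Qk M W (zit n ω)) := rfl
    rw [h1]
    exact (Measure.measurable_bind' (measurable_Qk hM hW _)).comp ih

lemma bind_smul_measure {E : Type*} [MeasurableSpace E] (c : ℝ≥0∞) (μ : Measure E)
    (f : E → Measure E) (hf : Measurable f) :
    (c • μ).bind f = c • μ.bind f := by
  refine Measure.ext fun s hs => ?_
  rw [Measure.bind_apply hs hf.aemeasurable, Measure.smul_apply, Measure.bind_apply hs hf.aemeasurable,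
    lintegral_smul_measure, smul_eq_mul]


/-- **Proposition 3.** Assuming (B1) and (B2), the constant `Λ` of Proposition 1
equals `𝔼[log λ]`, and equivalently
`Λ = ∫ log( Q^ω(h(zω,·))(x) / h(ω,x) ) ℙ(dω)` for any `x ∈ E`. -/
theorem proposition3
    (P : Measure (Env H)) [IsProbabilityMeasure P]
    (M : Env H → E → Measure E) (W : Env H → E → ℝ)
    (hMprob : ∀ ω x, IsProbabilityMeasure (M ω x))
    (hMmeas : Measurable fun p : Env H × E => M p.1 p.2)
    (hWmeas : Measurable fun p : Env H × E => W p.1 p.2)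
    (hWnn : ∀ ω x, 0 ≤ W ω x) (CW : ℝ) (hWbdd : ∀ ω x, W ω x ≤ CW)
    -- (B1)
    (hB1 : Ergodic (shift : Env H → Env H) P)
    -- (B2)
    (Δ1 : ℝ) (hΔ1 : 0 < Δ1)
    (hB2a : ∀ ω x u, ∫⁻ y, ENNReal.ofReal (W (shift ω) y) ∂(M ω x)
        ≤ ENNReal.ofReal Δ1 * ∫⁻ y, ENNReal.ofReal (W (shift ω) y) ∂(M ω u))
    (εm εp : ℝ) (hεm : 0 < εm) (hεmp : εm ≤ εp)
    (ν : Measure E) [IsProbabilityMeasure ν]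
    (hB2b : ∀ ω x, ∀ A : Set E, MeasurableSet A →
        ENNReal.ofReal εm * ν A ≤ M ω x A ∧ M ω x A ≤ ENNReal.ofReal εp * ν A)
    (Δ2 : ℝ) (hΔ2 : 0 < Δ2)
    (hB2c : ∀ n : ℕ, 1 ≤ n → ∀ ω, ∀ σ₁ σ₂ : Measure E,
        IsProbabilityMeasure σ₁ → IsProbabilityMeasure σ₂ →
        QnMass M W n ω σ₁ ≤ ENNReal.ofReal Δ2 * QnMass M W n ω σ₂)
    (hB2d : ∀ n : ℕ, 1 ≤ n → ∀ ω, ∀ σ : Measure E, IsProbabilityMeasure σ →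
        0 < QnMass M W n ω σ ∧ QnMass M W n ω σ < ∞)
    -- Λ: the constant of Proposition 1
    (Λ : ℝ)
    (hΛ : ∀ μ : Measure E, IsProbabilityMeasure μ →
      ∀ᵐ ω ∂P, Tendsto
        (fun n : ℕ => (1 / (n : ℝ)) * Real.log ((QnMass M W n ω μ).toReal))
        atTop (𝓝 Λ))
    -- (η, h, λ): the eigen-triple of Proposition 2, characterised by the limits
    (η : Env H → Measure E) (h : Env H → E → ℝ) (lam : Env H → ℝ)
    (hη : ∀ ω, IsProbabilityMeasure (η ω))
    (hηlim : ∀ σ : Measure E, IsProbabilityMeasure σ → ∀ ω, ∀ A : Set E,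
      MeasurableSet A →
        Tendsto (fun n : ℕ => PhiSet M W n (zitInv n ω) σ A) atTop (𝓝 (η ω A)))
    (hhpos : ∀ ω x, 0 < h ω x)
    (hhmeas : Measurable (fun p : Env H × E => h p.1 p.2))
    (hhlim : ∀ σ : Measure E, IsProbabilityMeasure σ → ∀ ω x,
        Tendsto (fun n : ℕ => (ratioH M W σ n ω x).toReal) atTop (𝓝 (h ω x)))
    (hlammeas : Measurable lam)
    (hlampos : ∀ ω, 0 < lam ω)
    (hlamdef : ∀ ω, lam ω = ∫ x, W ω x ∂(η ω))
    -- the eigen-equations satisfied by the triple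
    (heig1 : ∀ ω, ∀ A : Set E, MeasurableSet A →
        ((η ω).bind (Qk M W ω)) A = ENNReal.ofReal (lam ω) * η (shift ω) A)
    (heig2 : ∀ ω x, ∫ y, h (shift ω) y ∂(Qk M W ω x) = lam ω * h ω x)
    (heig3 : ∀ ω, ∫ x, h ω x ∂(η ω) = 1) :
    Λ = ∫ ω, Real.log (lam ω) ∂P ∧
    ∀ x : E, Λ = ∫ ω, Real.log
        ((∫ y, h (shift ω) y ∂(Qk M W ω x)) / h ω x) ∂P := by
  classical
  -- measurable kernel families
  have hQkm : ∀ ω, Measurable (Qk M W ω) := measurable_Qk hMmeas hWmeas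
  have hQnm : ∀ n ω, Measurable (Qn M W n ω) := fun n ω => measurable_Qn hMmeas hWmeas n ω
  -- the eigen-equation as an equality of measures
  have heig1' : ∀ ω, (η ω).bind (Qk M W ω) = ENNReal.ofReal (lam ω) • η (shift ω) := by
    intro ω
    refine Measure.ext fun s hs => ?_
    rw [heig1 ω s hs, Measure.smul_apply, smul_eq_mul]
  -- η Q_n = (∏ λ) η_shifted
  have hbindQn : ∀ ω (n : ℕ), (η ω).bind (Qn M W n ω)
      = (∏ k ∈ Finset.range n, ENNReal.ofReal (lam (zit k ω))) • η (zit n ω) := by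
    intro ω n
    induction n with
    | zero =>
      simp only [Finset.range_zero, Finset.prod_empty, one_smul]
      exact Measure.bind_dirac
    | succ n ih =>
      have h1 : Qn M W (n+1) ω = fun x => (Qn M W n ω x).bind (Qk M W (zit n ω)) := rfl
      rw [h1, ← Measure.bind_bind (hQnm n ω).aemeasurable (hQkm (zit n ω)).aemeasurable, ih,
        bind_smul_measure _ _ _ (hQkm (zit n ω)), heig1' (zit n ω), smul_smul,
        Finset.prod_range_succ]
      rfl
  -- the mass of η Q_n is the product of the eigenvalues
  have hmassη : ∀ ω (n : ℕ), (QnMass M W n ω (η ω)).toReal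
      = ∏ k ∈ Finset.range n, lam (zit k ω) := by
    intro ω n
    have h1 : QnMass M W n ω (η ω)
        = ∏ k ∈ Finset.range n, ENNReal.ofReal (lam (zit k ω)) := by
      rw [QnMass, hbindQn ω n, Measure.smul_apply, (hη (zit n ω)).measure_univ,
        smul_eq_mul, mul_one]
    rw [h1, ENNReal.toReal_prod]
    exact Finset.prod_congr rfl fun k _ => ENNReal.toReal_ofReal (hlampos _).le
  -- comparison of masses for η and ν
  have hcomp : ∀ ω, ∀ n : ℕ, 1 ≤ n →
      |Real.log ((QnMass M W n ω (η ω)).toReal)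
        - Real.log ((QnMass M W n ω ν).toReal)| ≤ |Real.log Δ2| := by
    intro ω n hn
    obtain ⟨hapos, hafin⟩ := hB2d n hn ω (η ω) (hη ω)
    obtain ⟨hbpos, hbfin⟩ := hB2d n hn ω ν inferInstance
    have h1 := hB2c n hn ω (η ω) ν (hη ω) inferInstance
    have h2 := hB2c n hn ω ν (η ω) inferInstance (hη ω)
    have hat : 0 < (QnMass M W n ω (η ω)).toReal := ENNReal.toReal_pos hapos.ne' hafin.ne
    have hbt : 0 < (QnMass M W n ω ν).toReal := ENNReal.toReal_pos hbpos.ne' hbfin.ne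
    have h1' : (QnMass M W n ω (η ω)).toReal ≤ Δ2 * (QnMass M W n ω ν).toReal := by
      have h3 := ENNReal.toReal_mono
        (ENNReal.mul_ne_top ENNReal.ofReal_ne_top hbfin.ne) h1
      rwa [ENNReal.toReal_mul, ENNReal.toReal_ofReal hΔ2.le] at h3
    have h2' : (QnMass M W n ω ν).toReal ≤ Δ2 * (QnMass M W n ω (η ω)).toReal := by
      have h3 := ENNReal.toReal_mono
        (ENNReal.mul_ne_top ENNReal.ofReal_ne_top hafin.ne) h2
      rwa [ENNReal.toReal_mul, ENNReal.toReal_ofReal hΔ2.le] at h3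
    have l1 : Real.log ((QnMass M W n ω (η ω)).toReal)
        ≤ Real.log Δ2 + Real.log ((QnMass M W n ω ν).toReal) := by
      calc Real.log ((QnMass M W n ω (η ω)).toReal)
          ≤ Real.log (Δ2 * (QnMass M W n ω ν).toReal) := Real.log_le_log hat h1'
        _ = _ := Real.log_mul hΔ2.ne' hbt.ne'
    have l2 : Real.log ((QnMass M W n ω ν).toReal)
        ≤ Real.log Δ2 + Real.log ((QnMass M W n ω (η ω)).toReal) := by
      calc Real.log ((QnMass M W n ω ν).toReal)
          ≤ Real.log (Δ2 * (QnMass M W n ω (η ω)).toReal) := Real.log_le_log hbt h2'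
        _ = _ := Real.log_mul hΔ2.ne' hat.ne'
    have l3 := le_abs_self (Real.log Δ2)
    rw [abs_sub_le_iff]
    constructor <;> linarith
  -- a.e. convergence of the Birkhoff averages of log λ to Λ
  set f : Env H → ℝ := fun ω => Real.log (lam ω) with hfdef
  have hfsum : ∀ᵐ ω ∂P, Tendsto
      (fun n : ℕ => (∑ k ∈ Finset.range n, f (shift^[k] ω)) / n) atTop (𝓝 Λ) := by
    filter_upwards [hΛ ν inferInstance] with ω hω
    have hlogsum : ∀ n : ℕ, Real.log ((QnMass M W n ω (η ω)).toReal)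
        = ∑ k ∈ Finset.range n, f (shift^[k] ω) := by
      intro n
      rw [hmassη ω n, Real.log_prod (fun k _ => (hlampos _).ne')]
      exact Finset.sum_congr rfl fun k _ => by rw [← zit_eq_iterate]
    have hd : Tendsto (fun n : ℕ => (∑ k ∈ Finset.range n, f (shift^[k] ω)) / n
        - (1 / (n:ℝ)) * Real.log ((QnMass M W n ω ν).toReal)) atTop (𝓝 0) := by
      apply squeeze_zero_norm' _ (tendsto_const_div_atTop_nhds_zero_nat |Real.log Δ2|)
      filter_upwards [eventually_ge_atTop 1] with n hn
      have hnpos : (0:ℝ) < n := by exact_mod_cast hn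
      have hcn := hcomp ω n hn
      rw [Real.norm_eq_abs]
      have heqn : (∑ k ∈ Finset.range n, f (shift^[k] ω)) / n
          - (1 / (n:ℝ)) * Real.log ((QnMass M W n ω ν).toReal)
          = (Real.log ((QnMass M W n ω (η ω)).toReal)
              - Real.log ((QnMass M W n ω ν).toReal)) / n := by
        rw [← hlogsum n]
        field_simp
      rw [heqn, abs_div, abs_of_nonneg hnpos.le]
      gcongr
    have h3 := hd.add hω
    rw [zero_add] at h3
    refine h3.congr fun n => ?_
    ring
  -- boundedness of log λ from above
  have hne : Nonempty (Env H) := by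
    by_contra hcon
    rw [not_nonempty_iff] at hcon
    have h1 : P Set.univ = 1 := measure_univ
    rw [Set.univ_eq_empty_iff.2 hcon, measure_empty] at h1
    exact zero_ne_one h1
  have hlamle : ∀ ω, lam ω ≤ CW := by
    intro ω
    haveI := hη ω
    rw [hlamdef ω]
    have hWint : Integrable (fun x => W ω x) (η ω) := by
      refine (integrable_const CW).mono'
        ((hWmeas.comp measurable_prodMk_left).aestronglyMeasurable) ?_
      exact Eventually.of_forall fun x => by
        rw [Real.norm_eq_abs, abs_of_nonneg (hWnn ω x)]; exact hWbdd ω x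
    calc ∫ x, W ω x ∂(η ω) ≤ ∫ _x, CW ∂(η ω) :=
          integral_mono hWint (integrable_const CW) (fun x => hWbdd ω x)
      _ = CW := by simp [measure_univ]
  set C : ℝ := Real.log CW with hCdef
  have hfC : ∀ ω, f ω ≤ C := fun ω => Real.log_le_log (hlampos ω) (hlamle ω)
  -- apply the converse-Birkhoff lemma to C - f
  have hgconv : ∀ᵐ ω ∂P, Tendsto (fun n : ℕ =>
      (birkS shift (fun ω' => C - f ω') n ω) / n) atTop (𝓝 (C - Λ)) := by
    filter_upwards [hfsum] with ω hω
    have h1 := (tendsto_const_nhds (x := C) (f := (atTop : Filter ℕ))).sub hω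
    refine Tendsto.congr' ?_ h1
    filter_upwards [eventually_ge_atTop 1] with n hn
    have hnpos : (0:ℝ) < n := by exact_mod_cast hn
    have hbs : birkS shift (fun ω' => C - f ω') n ω
        = ∑ k ∈ Finset.range n, (C - f (shift^[k] ω)) := rfl
    rw [hbs, Finset.sum_sub_distrib, Finset.sum_const, Finset.card_range,
      nsmul_eq_mul, sub_div, mul_comm (n:ℝ) C, mul_div_assoc, div_self hnpos.ne',
      mul_one]
  obtain ⟨hgint, hgval⟩ := lemA P shift hB1.toMeasurePreserving (fun ω => C - f ω)
    (measurable_const.sub (Real.measurable_log.comp hlammeas))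
    (fun ω => sub_nonneg.2 (hfC ω)) (C - Λ) hgconv
  have hfint : Integrable f P := by
    have h1 : f = fun ω => C - (C - f ω) := by funext ω; ring
    rw [h1]
    exact (integrable_const C).sub hgint
  have hfval : ∫ ω, f ω ∂P = Λ := by
    have h1 : ∫ ω, (C - f ω) ∂P = C - ∫ ω, f ω ∂P := by
      rw [integral_sub (integrable_const C) hfint, integral_const]
      simp [measure_univ]
    rw [h1] at hgval
    linarith
  refine ⟨hfval.symm, fun x => ?_⟩
  have hcong : ∀ ω, Real.log (lam ω * h ω x / h ω x) = Real.log (lam ω) := fun ω => by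
    rw [mul_div_assoc, div_self (hhpos ω x).ne', mul_one]
  simp only [heig2, hcong]
  exact hfval.symm

end
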